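/- For a nonzero vector y ∈ R^n and real symmetric matrix A with τ = Ay, s(A) ≥ 2·sqrt((Σyᵢ²)(Στᵢ²) - (Σyᵢτᵢ)²)/(Σyᵢ²). -/

import Mathlib

open Matrix Finset

/-- The spread of a Hermitian real matrix: largest minus smallest eigenvalue. -/
noncomputable def spread {n : ℕ} {A : Matrix (Fin n) (Fin n) ℝ} (hA : A.IsHermitian) : ℝ :=
  (⨆ i, hA.eigenvalues i) - ⨅ i, hA.eigenvalues i

lemma key_ineq {n : ℕ} [Nonempty (Fin n)] (lam c : Fin n → ℝ)
    (ht : 0 < ∑ i, (c i) ^ 2) :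
    2 * Real.sqrt ((∑ i, (c i) ^ 2) * (∑ i, (lam i * c i) ^ 2)
      - (∑ i, c i * (lam i * c i)) ^ 2) / (∑ i, (c i) ^ 2)
      ≤ (⨆ i, lam i) - ⨅ i, lam i := by
  set M := ⨆ i, lam i with hMdef
  set m := ⨅ i, lam i with hmdef
  have hM : ∀ i, lam i ≤ M := fun i =>
    le_ciSup (Set.Finite.bddAbove (Set.finite_range lam)) i
  have hm : ∀ i, m ≤ lam i := fun i =>
    ciInf_le (Set.Finite.bddBelow (Set.finite_range lam)) i
  have hMm : m ≤ M := le_trans (hm (Classical.arbitrary _)) (hM (Classical.arbitrary _))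
  set t := ∑ i, (c i) ^ 2 with htdef
  set S1 := ∑ i, c i * (lam i * c i) with hS1def
  set S2 := ∑ i, (lam i * c i) ^ 2 with hS2def
  -- pointwise bound summed
  have hsum : S2 ≤ (M + m) * S1 - M * m * t := by
    have : S2 ≤ ∑ i, ((M + m) * (c i * (lam i * c i)) - M * m * (c i) ^ 2) := by
      apply Finset.sum_le_sum
      intro i _
      nlinarith [mul_nonneg (sub_nonneg.2 (hM i)) (sub_nonneg.2 (hm i)), sq_nonneg (c i)]
    rw [Finset.sum_sub_distrib, ← Finset.mul_sum, ← Finset.mul_sum] at this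
    exact this
  have hkey : t * S2 - S1 ^ 2 ≤ (t * (M - m) / 2) ^ 2 := by
    nlinarith [sq_nonneg (t * M - S1 - (S1 - t * m)), ht.le]
  have hsq : Real.sqrt (t * S2 - S1 ^ 2) ≤ t * (M - m) / 2 := by
    have h2 : 0 ≤ t * (M - m) / 2 :=
      div_nonneg (mul_nonneg ht.le (sub_nonneg.2 hMm)) (by norm_num)
    calc Real.sqrt (t * S2 - S1 ^ 2) ≤ Real.sqrt ((t * (M - m) / 2) ^ 2) :=
          Real.sqrt_le_sqrt hkey
      _ = t * (M - m) / 2 := Real.sqrt_sq h2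
  rw [div_le_iff₀ ht]
  nlinarith [hsq]

theorem spread_lower_bound_vec {n : ℕ} (A : Matrix (Fin n) (Fin n) ℝ) (hA : A.IsHermitian)
    (y : Fin n → ℝ) (hy : y ≠ 0) :
    spread hA ≥ 2 * Real.sqrt ((∑ i, (y i) ^ 2) * (∑ i, (A.mulVec y i) ^ 2)
      - (∑ i, y i * A.mulVec y i) ^ 2) / (∑ i, (y i) ^ 2) := by
  have hn : Nonempty (Fin n) := by
    rcases n with _ | n
    · exact absurd (Subsingleton.elim y 0) hy
    · infer_instance
  set B := hA.eigenvectorBasis with hBdef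
  set lam := hA.eigenvalues with hlamdef
  set Y : EuclideanSpace ℝ (Fin n) := (WithLp.equiv 2 _).symm y with hYdef
  set T : EuclideanSpace ℝ (Fin n) := (WithLp.equiv 2 _).symm (A.mulVec y) with hTdef
  set c : Fin n → ℝ := fun i => inner ℝ (B i) Y with hcdef
  -- inner products in coordinates
  have hinner : ∀ u v : EuclideanSpace ℝ (Fin n),
      (inner ℝ u v : ℝ) = ∑ i, u i * v i := by
    intro u v
    simp [PiLp.inner_apply, RCLike.inner_apply, mul_comm]
  -- eigen relation: ⟪B i, T⟫ = lam i * c i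
  have hBT : ∀ i, (inner ℝ (B i) T : ℝ) = lam i * c i := by
    intro i
    have h1 : (inner ℝ (B i) T : ℝ) = (⇑(B i) : Fin n → ℝ) ⬝ᵥ (A *ᵥ y) := by
      rw [hinner]; rfl
    have hAT : Aᵀ = A := by
      ext a b
      simpa using congrFun (congrFun hA.eq a) b
    have h2 : (⇑(B i) : Fin n → ℝ) ⬝ᵥ (A *ᵥ y) = (A *ᵥ ⇑(B i)) ⬝ᵥ y := by
      rw [dotProduct_mulVec, ← mulVec_transpose, hAT]
    have h3 : (A *ᵥ ⇑(B i)) ⬝ᵥ y = lam i * ((⇑(B i) : Fin n → ℝ) ⬝ᵥ y) := by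
      rw [hA.mulVec_eigenvectorBasis]
      simp [smul_dotProduct, hlamdef, hBdef]
    have h4 : ((⇑(B i) : Fin n → ℝ) ⬝ᵥ y) = c i := by
      show _ = (inner ℝ (B i) Y : ℝ)
      rw [hinner]; rfl
    rw [h1, h2, h3, h4]
  have hBY : ∀ i, (inner ℝ (B i) Y : ℝ) = c i := fun i => rfl
  have parseval : ∀ u v : EuclideanSpace ℝ (Fin n),
      (inner ℝ u v : ℝ) = ∑ i, (inner ℝ u (B i) : ℝ) * (inner ℝ (B i) v : ℝ) :=
    fun u v => (B.sum_inner_mul_inner u v).symm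
  have hsym : ∀ (u : EuclideanSpace ℝ (Fin n)) i,
      (inner ℝ u (B i) : ℝ) = inner ℝ (B i) u := fun u i => real_inner_comm _ _
  -- translate the three sums
  have e1 : ∑ i, (y i) ^ 2 = ∑ i, (c i) ^ 2 := by
    have := parseval Y Y
    rw [hinner] at this
    simp only [hsym, hBY] at this
    calc ∑ i, (y i) ^ 2 = ∑ i, Y i * Y i := by apply Finset.sum_congr rfl; intro i _; rw [sq]; rfl
      _ = ∑ i, (c i) ^ 2 := by rw [this]; apply Finset.sum_congr rfl; intro i _; rw [sq]
  have e2 : ∑ i, (A.mulVec y i) ^ 2 = ∑ i, (lam i * c i) ^ 2 := by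
    have := parseval T T
    rw [hinner] at this
    simp only [hsym, hBT] at this
    calc ∑ i, (A.mulVec y i) ^ 2 = ∑ i, T i * T i := by
          apply Finset.sum_congr rfl; intro i _; rw [sq]; rfl
      _ = ∑ i, (lam i * c i) ^ 2 := by rw [this]; apply Finset.sum_congr rfl; intro i _; rw [sq]
  have e3 : ∑ i, y i * A.mulVec y i = ∑ i, c i * (lam i * c i) := by
    have := parseval Y T
    rw [hinner] at this
    simp only [hsym, hBT, hBY] at this
    calc ∑ i, y i * A.mulVec y i = ∑ i, Y i * T i := rfl
      _ = ∑ i, c i * (lam i * c i) := this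
  have ht : 0 < ∑ i, (c i) ^ 2 := by
    rw [← e1]
    rcases Function.ne_iff.1 hy with ⟨j, hj⟩
    apply Finset.sum_pos' (fun i _ => sq_nonneg _) ⟨j, Finset.mem_univ j, sq_pos_of_ne_zero hj⟩
  rw [ge_iff_le, e1, e2, e3]
  exact key_ineq lam c ht
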